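/- If A has a bounded weak approximate identity, then C_BSE(Δ(A)) is unital, its character space Δ(C_BSE(Δ(A))) is weak-* compact, and the weak-* closure of {f_φ : φ ∈ Δ(A)} is contained in Δ(C_BSE(Δ(A))), where f_φ(σ) = σ(φ). -/

import Mathlib

set_option linter.unusedSectionVars false


open WeakDual Filter

variable {A : Type*} [NonUnitalNormedCommRing A] [NormedSpace ℂ A]
  [IsScalarTower ℂ A A] [SMulCommClass ℂ A A] [CompleteSpace A]

/-- The BSE inequality for a function on the character space of `A`. -/
def IsBSE (σ : WeakDual.characterSpace ℂ A → ℂ) : Prop :=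
  ∃ C > (0 : ℝ), ∀ (n : ℕ) (φ : Fin n → WeakDual.characterSpace ℂ A) (c : Fin n → ℂ),
    ‖∑ i, c i * σ (φ i)‖ ≤
      C * ‖WeakDual.toStrongDual (∑ i, c i • ((φ i : WeakDual ℂ A)))‖

/-- The BSE norm: the infimum of admissible constants. -/
noncomputable def bseNorm (σ : WeakDual.characterSpace ℂ A → ℂ) : ℝ :=
  sInf {C : ℝ | 0 < C ∧ ∀ (n : ℕ) (φ : Fin n → WeakDual.characterSpace ℂ A) (c : Fin n → ℂ),
    ‖∑ i, c i * σ (φ i)‖ ≤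
      C * ‖WeakDual.toStrongDual (∑ i, c i • ((φ i : WeakDual ℂ A)))‖}

lemma bseNorm_nonneg (σ : WeakDual.characterSpace ℂ A → ℂ) : 0 ≤ bseNorm σ :=
  Real.sInf_nonneg fun _ hC => hC.1.le

lemma bseNorm_le {σ : WeakDual.characterSpace ℂ A → ℂ} {C : ℝ} (hC : 0 < C)
    (h : ∀ (n : ℕ) (φ : Fin n → WeakDual.characterSpace ℂ A) (c : Fin n → ℂ),
      ‖∑ i, c i * σ (φ i)‖ ≤
        C * ‖WeakDual.toStrongDual (∑ i, c i • ((φ i : WeakDual ℂ A)))‖) :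
    bseNorm σ ≤ C :=
  csInf_le ⟨0, fun _ hx => hx.1.le⟩ ⟨hC, h⟩

lemma isBSE_norm_bound {σ : WeakDual.characterSpace ℂ A → ℂ} (h : IsBSE σ)
    (n : ℕ) (φ : Fin n → WeakDual.characterSpace ℂ A) (c : Fin n → ℂ) :
    ‖∑ i, c i * σ (φ i)‖ ≤
      bseNorm σ * ‖WeakDual.toStrongDual (∑ i, c i • ((φ i : WeakDual ℂ A)))‖ := by
  set R := ‖WeakDual.toStrongDual (∑ i, c i • ((φ i : WeakDual ℂ A)))‖ with hRdef
  have hR : 0 ≤ R := norm_nonneg _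
  refine le_of_forall_pos_le_add fun ε hε => ?_
  have hε' : (0:ℝ) < ε / (R + 1) := by positivity
  obtain ⟨C, hCmem, hCs⟩ := Real.lt_sInf_add_pos h hε'
  have h2 := hCmem.2 n φ c
  rw [← hRdef] at h2
  have : C * R ≤ bseNorm σ * R + ε := by
    have hRR : R / (R+1) ≤ 1 := by
      rw [div_le_one (by linarith)]; linarith
    have : C * R ≤ (bseNorm σ + ε / (R+1)) * R := by
      apply mul_le_mul_of_nonneg_right _ hR
      exact hCs.le
    calc C * R ≤ (bseNorm σ + ε / (R+1)) * R := this
      _ = bseNorm σ * R + ε * (R / (R+1)) := by ring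
      _ ≤ bseNorm σ * R + ε * 1 := by
          exact add_le_add_right (mul_le_mul_of_nonneg_left hRR hε.le) _
      _ = bseNorm σ * R + ε := by ring
  exact h2.trans this

lemma weakdual_eval (n : ℕ) (d : Fin n → ℂ) (ψ : Fin n → WeakDual.characterSpace ℂ A) (a : A) :
    WeakDual.toStrongDual (∑ i, d i • ((ψ i : WeakDual ℂ A))) a
      = ∑ i, d i * ((ψ i : WeakDual ℂ A)) a := by
  simp only [map_sum, map_smul, ContinuousLinearMap.sum_apply, ContinuousLinearMap.smul_apply, smul_eq_mul]
  rfl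

lemma isBSE_mul_bound {σ τ : WeakDual.characterSpace ℂ A → ℂ} (hσ : IsBSE σ) (hτ : IsBSE τ)
    (n : ℕ) (φ : Fin n → WeakDual.characterSpace ℂ A) (c : Fin n → ℂ) :
    ‖∑ i, c i * (σ (φ i) * τ (φ i))‖ ≤
      (bseNorm σ * bseNorm τ) *
        ‖WeakDual.toStrongDual (∑ i, c i • ((φ i : WeakDual ℂ A)))‖ := by
  set T := WeakDual.toStrongDual (∑ i, c i • ((φ i : WeakDual ℂ A))) with hT
  have hNσ := bseNorm_nonneg σ
  have hNτ := bseNorm_nonneg τ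
  have key := isBSE_norm_bound hσ n φ (fun i => c i * τ (φ i))
  have e1 : ∑ i, c i * (σ (φ i) * τ (φ i)) = ∑ i, (c i * τ (φ i)) * σ (φ i) := by
    apply Finset.sum_congr rfl; intros; ring
  rw [e1]
  refine key.trans ?_
  have hD : ‖WeakDual.toStrongDual (∑ i, (c i * τ (φ i)) • ((φ i : WeakDual ℂ A)))‖
      ≤ bseNorm τ * ‖T‖ := by
    apply ContinuousLinearMap.opNorm_le_bound _ (by positivity)
    intro a
    rw [weakdual_eval]
    have e2 : ∑ i, (c i * τ (φ i)) * ((φ i : WeakDual ℂ A)) a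
        = ∑ i, (c i * ((φ i : WeakDual ℂ A)) a) * τ (φ i) := by
      apply Finset.sum_congr rfl; intros; ring
    rw [e2]
    have key2 := isBSE_norm_bound hτ n φ (fun i => c i * ((φ i : WeakDual ℂ A)) a)
    refine key2.trans ?_
    have hE : ‖WeakDual.toStrongDual
        (∑ i, (c i * ((φ i : WeakDual ℂ A)) a) • ((φ i : WeakDual ℂ A)))‖
        ≤ ‖T‖ * ‖a‖ := by
      apply ContinuousLinearMap.opNorm_le_bound _ (by positivity)
      intro b
      rw [weakdual_eval]
      have e3 : ∑ i, (c i * ((φ i : WeakDual ℂ A)) a) * ((φ i : WeakDual ℂ A)) b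
          = ∑ i, c i * ((φ i : WeakDual ℂ A)) (a * b) := by
        apply Finset.sum_congr rfl; intro i _
        have : ((φ i : WeakDual ℂ A)) (a * b)
            = ((φ i : WeakDual ℂ A)) a * ((φ i : WeakDual ℂ A)) b := map_mul (φ i) a b
        rw [this]; ring
      rw [e3, ← weakdual_eval n c φ (a * b), ← hT]
      calc ‖T (a*b)‖ ≤ ‖T‖ * ‖a * b‖ := T.le_opNorm _
        _ ≤ ‖T‖ * (‖a‖ * ‖b‖) := by
            exact mul_le_mul_of_nonneg_left (norm_mul_le a b) (norm_nonneg _)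
        _ = ‖T‖ * ‖a‖ * ‖b‖ := by ring
    calc bseNorm τ * ‖WeakDual.toStrongDual
          (∑ i, (c i * ((φ i : WeakDual ℂ A)) a) • ((φ i : WeakDual ℂ A)))‖
        ≤ bseNorm τ * (‖T‖ * ‖a‖) := mul_le_mul_of_nonneg_left hE hNτ
      _ = bseNorm τ * ‖T‖ * ‖a‖ := by ring
  calc bseNorm σ * ‖WeakDual.toStrongDual (∑ i, (c i * τ (φ i)) • ((φ i : WeakDual ℂ A)))‖
      ≤ bseNorm σ * (bseNorm τ * ‖T‖) := mul_le_mul_of_nonneg_left hD hNσ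
    _ = (bseNorm σ * bseNorm τ) * ‖T‖ := by ring

lemma isBSE_mul {σ τ : WeakDual.characterSpace ℂ A → ℂ} (hσ : IsBSE σ) (hτ : IsBSE τ) :
    IsBSE (fun φ => σ φ * τ φ) := by
  have h0 : 0 ≤ bseNorm σ * bseNorm τ := mul_nonneg (bseNorm_nonneg σ) (bseNorm_nonneg τ)
  refine ⟨bseNorm σ * bseNorm τ + 1, by linarith, fun n φ c => ?_⟩
  refine (isBSE_mul_bound hσ hτ n φ c).trans ?_
  exact mul_le_mul_of_nonneg_right (by linarith) (norm_nonneg _)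

lemma bseNorm_mul_le {σ τ : WeakDual.characterSpace ℂ A → ℂ} (hσ : IsBSE σ) (hτ : IsBSE τ) :
    bseNorm (fun φ => σ φ * τ φ) ≤ bseNorm σ * bseNorm τ := by
  refine le_of_forall_pos_le_add fun ε hε => ?_
  have h0 : 0 ≤ bseNorm σ * bseNorm τ := mul_nonneg (bseNorm_nonneg σ) (bseNorm_nonneg τ)
  refine bseNorm_le (by linarith) fun n φ c => ?_
  refine (isBSE_mul_bound hσ hτ n φ c).trans ?_
  exact mul_le_mul_of_nonneg_right (by linarith) (norm_nonneg _)

variable (A) in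
/-- The space `C_BSE(Δ(A))` of BSE-functions, as a subtype of `C_b(Δ(A))`. -/
abbrev BSEfun :=
  {σ : BoundedContinuousFunction (WeakDual.characterSpace ℂ A) ℂ // IsBSE (⇑σ)}

/-- A character of `C_BSE(Δ(A))`: a nonzero multiplicative linear functional on the
BSE-functions which is bounded with respect to the BSE norm. -/
def IsBSECharacter (χ : BSEfun A → ℂ) : Prop :=
  (∀ σ τ ρ : BSEfun A, (ρ : BoundedContinuousFunction (WeakDual.characterSpace ℂ A) ℂ) =
      ↑σ + ↑τ → χ ρ = χ σ + χ τ) ∧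
  (∀ (c : ℂ) (σ ρ : BSEfun A),
    (ρ : BoundedContinuousFunction (WeakDual.characterSpace ℂ A) ℂ) = c • ↑σ →
      χ ρ = c * χ σ) ∧
  (∀ σ τ ρ : BSEfun A, (ρ : BoundedContinuousFunction (WeakDual.characterSpace ℂ A) ℂ) =
      ↑σ * ↑τ → χ ρ = χ σ * χ τ) ∧
  (∃ σ : BSEfun A, χ σ ≠ 0) ∧
  (∃ K : ℝ, ∀ σ : BSEfun A,
    ‖χ σ‖ ≤ K * bseNorm (⇑(σ : BoundedContinuousFunction (WeakDual.characterSpace ℂ A) ℂ)))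

-- the mul coercion fact
lemma bcf_mul_coe (f g : BoundedContinuousFunction (WeakDual.characterSpace ℂ A) ℂ) :
    ⇑(f * g) = fun x => f x * g x := rfl

lemma isBSE_coe_mul (σ τ : BSEfun A) :
    IsBSE (⇑((σ : BoundedContinuousFunction (WeakDual.characterSpace ℂ A) ℂ) * ↑τ)) := by
  rw [bcf_mul_coe]; exact isBSE_mul σ.2 τ.2

noncomputable def mulBSE (σ τ : BSEfun A) : BSEfun A := Subtype.mk _ (isBSE_coe_mul σ τ)

lemma mulBSE_coe (σ τ : BSEfun A) :
    (mulBSE σ τ : BoundedContinuousFunction (WeakDual.characterSpace ℂ A) ℂ) = ↑σ * ↑τ := rfl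

lemma bseNorm_mulBSE_le (σ τ : BSEfun A) :
    bseNorm (⇑(mulBSE σ τ : BoundedContinuousFunction (WeakDual.characterSpace ℂ A) ℂ)) ≤
      bseNorm (⇑(σ : BoundedContinuousFunction (WeakDual.characterSpace ℂ A) ℂ)) *
      bseNorm (⇑(τ : BoundedContinuousFunction (WeakDual.characterSpace ℂ A) ℂ)) := by
  rw [mulBSE_coe, bcf_mul_coe]
  exact bseNorm_mul_le σ.2 τ.2

set_option maxHeartbeats 1000000 in
lemma char_bound {χ : BSEfun A → ℂ} (hχ : IsBSECharacter χ) (σ : BSEfun A) :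
    ‖χ σ‖ ≤ bseNorm (⇑(σ : BoundedContinuousFunction (WeakDual.characterSpace ℂ A) ℂ)) := by
  obtain ⟨-, -, hmul, -, K, hK⟩ := hχ
  set K' : ℝ := max K 1 with hK'
  have hK'1 : (1:ℝ) ≤ K' := le_max_right _ _
  have hK'0 : (0:ℝ) < K' := lt_of_lt_of_le one_pos hK'1
  have hbd : ∀ τ : BSEfun A, ‖χ τ‖ ≤ K' * bseNorm
      (⇑(τ : BoundedContinuousFunction (WeakDual.characterSpace ℂ A) ℂ)) := fun τ =>
    (hK τ).trans (mul_le_mul_of_nonneg_right (le_max_left _ _) (bseNorm_nonneg _))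
  set N := bseNorm (⇑(σ : BoundedContinuousFunction (WeakDual.characterSpace ℂ A) ℂ)) with hN
  have hN0 : 0 ≤ N := bseNorm_nonneg _
  -- powers
  have hpow : ∀ m : ℕ, ∃ ρ : BSEfun A,
      bseNorm (⇑(ρ : BoundedContinuousFunction (WeakDual.characterSpace ℂ A) ℂ)) ≤ N ^ (m+1) ∧
      χ ρ = (χ σ) ^ (m+1) := by
    intro m
    induction m with
    | zero => exact ⟨σ, (pow_one N).ge, (pow_one _).symm⟩
    | succ k ih =>
      obtain ⟨ρ, hb, hval⟩ := ih
      refine ⟨mulBSE ρ σ, ?_, ?_⟩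
      · refine (bseNorm_mulBSE_le ρ σ).trans ?_
        rw [pow_succ]
        exact mul_le_mul_of_nonneg_right hb hN0
      · have := hmul ρ σ (mulBSE ρ σ) (mulBSE_coe ρ σ)
        rw [this, hval]; ring
  -- conclude
  by_contra hcon
  push_neg at hcon
  have ht0 : 0 < ‖χ σ‖ := lt_of_le_of_lt hN0 hcon
  have hmain : ∀ m : ℕ, ‖χ σ‖ ^ (m+1) ≤ K' * N ^ (m+1) := by
    intro m
    obtain ⟨ρ, hb, hval⟩ := hpow m
    calc ‖χ σ‖ ^ (m+1) = ‖(χ σ) ^ (m+1)‖ := (norm_pow _ _).symm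
      _ = ‖χ ρ‖ := by rw [hval]
      _ ≤ K' * bseNorm (⇑(ρ : BoundedContinuousFunction (WeakDual.characterSpace ℂ A) ℂ)) := hbd ρ
      _ ≤ K' * N ^ (m+1) := mul_le_mul_of_nonneg_left hb hK'0.le
  rcases eq_or_lt_of_le hN0 with hNz | hNpos
  · have h00 := hmain 0
    rw [← hNz, zero_pow (by norm_num : (0:ℕ)+1 ≠ 0), mul_zero, pow_one] at h00
    linarith
  · have hr : 1 < ‖χ σ‖ / N := (one_lt_div hNpos).mpr hcon
    obtain ⟨m, hm⟩ := pow_unbounded_of_one_lt K' hr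
    have hm1 : K' < (‖χ σ‖ / N) ^ (m+1) := by
      refine hm.trans_le ?_
      exact pow_le_pow_right₀ (by linarith) (Nat.le_succ m)
    have := hmain m
    have hNpow : 0 < N ^ (m+1) := pow_pos hNpos _
    rw [div_pow, lt_div_iff₀ hNpow] at hm1
    nlinarith

variable (A) in
/-- The character space `Δ(C_BSE(Δ(A)))`, as a set of functionals carrying the topology of
pointwise (weak-*) convergence. -/
def bseCharSet : Set (BSEfun A → ℂ) := {χ | IsBSECharacter χ}

/-- The evaluation character `f_φ : C_BSE(Δ(A)) → ℂ`, `f_φ(σ) = σ(φ)`. -/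
noncomputable def evalBSE (φ : WeakDual.characterSpace ℂ A) : BSEfun A → ℂ :=
  fun σ => (σ : BoundedContinuousFunction (WeakDual.characterSpace ℂ A) ℂ) φ

variable (A) in
/-- The character space of `A` viewed as a subset of the dual `A*` (weak-* topology). -/
def charSet : Set (WeakDual ℂ A) :=
  Set.range ((↑) : WeakDual.characterSpace ℂ A → WeakDual ℂ A)

set_option maxHeartbeats 1000000 in
/-- if `A` has a bounded weak approximate identity, then `C_BSE(Δ(A))` is
unital (the constant function `1` is a BSE-function), its character space is weak-*
compact, and the weak-* closure of `{f_φ : φ ∈ Δ(A)}` is contained in `Δ(C_BSE(Δ(A)))`. -/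
theorem bwai_unital_compact_closure_subset
    (hss : ∀ a : A, (∀ φ : WeakDual.characterSpace ℂ A, φ a = 0) → a = 0)
    (hbwai : ∃ (ι : Type) (P : Preorder ι), Nonempty ι ∧ IsDirected ι (fun a b => P.le a b) ∧
      ∃ (x : ι → A) (β : ℝ), (∀ i, ‖x i‖ ≤ β) ∧
        ∀ φ : WeakDual.characterSpace ℂ A,
          Tendsto (fun i => φ (x i)) (@Filter.atTop ι P) (nhds (1 : ℂ))) :
    IsBSE (fun _ : WeakDual.characterSpace ℂ A => (1 : ℂ)) ∧
    IsCompact (bseCharSet A) ∧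
    closure (Set.range (evalBSE (A := A))) ⊆ bseCharSet A := by
  -- Part 1 : the constant function 1 is BSE
  have h1 : IsBSE (fun _ : WeakDual.characterSpace ℂ A => (1 : ℂ)) := by
    obtain ⟨ι, P, hne, hdir, x, β, hβ, hlim⟩ := hbwai
    letI := P
    haveI : Nonempty ι := hne
    haveI hNB : (Filter.atTop (α := ι)).NeBot := atTop_neBot_iff.mpr ⟨hne, hdir⟩
    refine ⟨max β 1, lt_of_lt_of_le one_pos (le_max_right _ _), fun n φ c => ?_⟩
    set R := ‖WeakDual.toStrongDual (∑ i, c i • ((φ i : WeakDual ℂ A)))‖ with hR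
    have hR0 : 0 ≤ R := norm_nonneg _
    have hlimsum : Tendsto (fun j => ∑ i, c i * ((φ i : WeakDual ℂ A)) (x j)) atTop
        (nhds (∑ i : Fin n, c i * 1)) := by
      apply tendsto_finset_sum
      intro i _
      exact (hlim (φ i)).const_mul (c i)
    refine le_of_tendsto hlimsum.norm (Filter.Eventually.of_forall fun j => ?_)
    rw [← weakdual_eval n c φ (x j)]
    calc ‖WeakDual.toStrongDual (∑ i, c i • ((φ i : WeakDual ℂ A))) (x j)‖
        ≤ R * ‖x j‖ := ContinuousLinearMap.le_opNorm _ _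
      _ ≤ R * β := by
          refine mul_le_mul_of_nonneg_left (hβ j) hR0
      _ ≤ max β 1 * R := by nlinarith [le_max_left β (1:ℝ)]
  have h1' : IsBSE (⇑(1 : BoundedContinuousFunction (WeakDual.characterSpace ℂ A) ℂ)) := h1
  set oneB : BSEfun A := Subtype.mk _ h1' with honeB
  have honecoe : (oneB : BoundedContinuousFunction (WeakDual.characterSpace ℂ A) ℂ) = 1 := rfl
  -- the closed description of the character set
  set T : Set (BSEfun A → ℂ) := {χ |
    (∀ σ τ ρ : BSEfun A, (ρ : BoundedContinuousFunction (WeakDual.characterSpace ℂ A) ℂ) =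
        ↑σ + ↑τ → χ ρ = χ σ + χ τ) ∧
    (∀ (c : ℂ) (σ ρ : BSEfun A),
      (ρ : BoundedContinuousFunction (WeakDual.characterSpace ℂ A) ℂ) = c • ↑σ →
        χ ρ = c * χ σ) ∧
    (∀ σ τ ρ : BSEfun A, (ρ : BoundedContinuousFunction (WeakDual.characterSpace ℂ A) ℂ) =
        ↑σ * ↑τ → χ ρ = χ σ * χ τ) ∧
    χ oneB = 1 ∧
    (∀ σ : BSEfun A,
      ‖χ σ‖ ≤ bseNorm (⇑(σ : BoundedContinuousFunction (WeakDual.characterSpace ℂ A) ℂ)))}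
    with hT
  have hchar : bseCharSet A = T := by
    ext χ
    constructor
    · intro hχ
      obtain ⟨ha, hs, hm, ⟨σ0, hσ0⟩, hbK⟩ := hχ
      refine ⟨ha, hs, hm, ?_, fun σ => char_bound ⟨ha, hs, hm, ⟨σ0, hσ0⟩, hbK⟩ σ⟩
      have h := hm σ0 oneB σ0 (by rw [honecoe, mul_one])
      have h2 : χ σ0 * 1 = χ σ0 * χ oneB := by rw [mul_one, ← h]
      exact (mul_left_cancel₀ hσ0 h2).symm
    · rintro ⟨ha, hs, hm, hone, hb⟩
      exact ⟨ha, hs, hm, ⟨oneB, by rw [hone]; exact one_ne_zero⟩,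
        ⟨1, fun σ => by rw [one_mul]; exact hb σ⟩⟩
  have hTclosed : IsClosed T := by
    rw [hT]
    refine IsClosed.inter ?_ (IsClosed.inter ?_ (IsClosed.inter ?_ (IsClosed.inter ?_ ?_)))
    · have e : {χ : BSEfun A → ℂ | ∀ σ τ ρ : BSEfun A,
          (ρ : BoundedContinuousFunction (WeakDual.characterSpace ℂ A) ℂ) = ↑σ + ↑τ →
            χ ρ = χ σ + χ τ} = ⋂ (σ : BSEfun A), ⋂ (τ : BSEfun A), ⋂ (ρ : BSEfun A),
          {χ : BSEfun A → ℂ |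
            (ρ : BoundedContinuousFunction (WeakDual.characterSpace ℂ A) ℂ) = ↑σ + ↑τ →
            χ ρ = χ σ + χ τ} := by
        ext χ; simp only [Set.mem_iInter, Set.mem_setOf_eq]
      refine Eq.mpr (congrArg IsClosed e) ?_
      refine isClosed_iInter fun σ => isClosed_iInter fun τ => isClosed_iInter fun ρ => ?_
      by_cases h : (ρ : BoundedContinuousFunction (WeakDual.characterSpace ℂ A) ℂ) = ↑σ + ↑τ
      · have e2 : {χ : BSEfun A → ℂ | (ρ : BoundedContinuousFunction (WeakDual.characterSpace ℂ A) ℂ) = ↑σ + ↑τ → χ ρ = χ σ + χ τ} =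
            {χ : BSEfun A → ℂ | χ ρ = χ σ + χ τ} := by ext χ; simp [h]
        rw [e2]
        exact isClosed_eq (continuous_apply ρ) ((continuous_apply σ).add (continuous_apply τ))
      · have e2 : {χ : BSEfun A → ℂ | (ρ : BoundedContinuousFunction (WeakDual.characterSpace ℂ A) ℂ) = ↑σ + ↑τ → χ ρ = χ σ + χ τ} = Set.univ := by ext χ; simp [h]
        rw [e2]; exact isClosed_univ
    · have e : {χ : BSEfun A → ℂ | ∀ (c : ℂ) (σ ρ : BSEfun A),
          (ρ : BoundedContinuousFunction (WeakDual.characterSpace ℂ A) ℂ) = c • ↑σ →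
            χ ρ = c * χ σ} = ⋂ (c : ℂ), ⋂ (σ : BSEfun A), ⋂ (ρ : BSEfun A),
          {χ : BSEfun A → ℂ |
            (ρ : BoundedContinuousFunction (WeakDual.characterSpace ℂ A) ℂ) = c • ↑σ →
            χ ρ = c * χ σ} := by
        ext χ; simp only [Set.mem_iInter, Set.mem_setOf_eq]
      refine Eq.mpr (congrArg IsClosed e) ?_
      refine isClosed_iInter fun c => isClosed_iInter fun σ => isClosed_iInter fun ρ => ?_
      by_cases h : (ρ : BoundedContinuousFunction (WeakDual.characterSpace ℂ A) ℂ) = c • ↑σ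
      · have e2 : {χ : BSEfun A → ℂ | (ρ : BoundedContinuousFunction (WeakDual.characterSpace ℂ A) ℂ) = c • ↑σ → χ ρ = c * χ σ} =
            {χ : BSEfun A → ℂ | χ ρ = c * χ σ} := by ext χ; simp [h]
        rw [e2]
        exact isClosed_eq (continuous_apply ρ) (continuous_const.mul (continuous_apply σ))
      · have e2 : {χ : BSEfun A → ℂ | (ρ : BoundedContinuousFunction (WeakDual.characterSpace ℂ A) ℂ) = c • ↑σ → χ ρ = c * χ σ} = Set.univ := by ext χ; simp [h]
        rw [e2]; exact isClosed_univ
    · have e : {χ : BSEfun A → ℂ | ∀ σ τ ρ : BSEfun A,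
          (ρ : BoundedContinuousFunction (WeakDual.characterSpace ℂ A) ℂ) = ↑σ * ↑τ →
            χ ρ = χ σ * χ τ} = ⋂ (σ : BSEfun A), ⋂ (τ : BSEfun A), ⋂ (ρ : BSEfun A),
          {χ : BSEfun A → ℂ |
            (ρ : BoundedContinuousFunction (WeakDual.characterSpace ℂ A) ℂ) = ↑σ * ↑τ →
            χ ρ = χ σ * χ τ} := by
        ext χ; simp only [Set.mem_iInter, Set.mem_setOf_eq]
      refine Eq.mpr (congrArg IsClosed e) ?_
      refine isClosed_iInter fun σ => isClosed_iInter fun τ => isClosed_iInter fun ρ => ?_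
      by_cases h : (ρ : BoundedContinuousFunction (WeakDual.characterSpace ℂ A) ℂ) = ↑σ * ↑τ
      · have e2 : {χ : BSEfun A → ℂ | (ρ : BoundedContinuousFunction (WeakDual.characterSpace ℂ A) ℂ) = ↑σ * ↑τ → χ ρ = χ σ * χ τ} =
            {χ : BSEfun A → ℂ | χ ρ = χ σ * χ τ} := by ext χ; simp [h]
        rw [e2]
        exact isClosed_eq (continuous_apply ρ) ((continuous_apply σ).mul (continuous_apply τ))
      · have e2 : {χ : BSEfun A → ℂ | (ρ : BoundedContinuousFunction (WeakDual.characterSpace ℂ A) ℂ) = ↑σ * ↑τ → χ ρ = χ σ * χ τ} = Set.univ := by ext χ; simp [h]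
        rw [e2]; exact isClosed_univ
    · exact isClosed_eq (continuous_apply oneB) continuous_const
    · have e : {χ : BSEfun A → ℂ | ∀ σ : BSEfun A,
          ‖χ σ‖ ≤ bseNorm (⇑(σ : BoundedContinuousFunction (WeakDual.characterSpace ℂ A) ℂ))}
          = ⋂ (σ : BSEfun A), {χ : BSEfun A → ℂ |
            ‖χ σ‖ ≤ bseNorm (⇑(σ : BoundedContinuousFunction (WeakDual.characterSpace ℂ A) ℂ))} := by
        ext χ; simp only [Set.mem_iInter, Set.mem_setOf_eq]
      exact Eq.mpr (congrArg IsClosed e) (isClosed_iInter fun σ =>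
        isClosed_le ((continuous_apply σ).norm) continuous_const)
  have hclosed : IsClosed (bseCharSet A) := by rw [hchar]; exact hTclosed
  have hsub : T ⊆ Set.univ.pi (fun σ : BSEfun A => Metric.closedBall (0:ℂ)
      (bseNorm (⇑(σ : BoundedContinuousFunction (WeakDual.characterSpace ℂ A) ℂ)))) := by
    intro χ hχ σ _
    simp only [Metric.mem_closedBall, dist_zero_right]
    exact hχ.2.2.2.2 σ
  have hcomp : IsCompact (bseCharSet A) := by
    rw [hchar]
    exact IsCompact.of_isClosed_subset
      (isCompact_univ_pi fun σ => isCompact_closedBall _ _) hTclosed hsub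
  have hrange : Set.range (evalBSE (A := A)) ⊆ bseCharSet A := by
    rintro _ ⟨φ, rfl⟩
    refine ⟨?_, ?_, ?_, ?_, ?_⟩
    · intro σ τ ρ h
      show (ρ : BoundedContinuousFunction (WeakDual.characterSpace ℂ A) ℂ) φ = _
      rw [h]; rfl
    · intro c σ ρ h
      show (ρ : BoundedContinuousFunction (WeakDual.characterSpace ℂ A) ℂ) φ = _
      rw [h]; rfl
    · intro σ τ ρ h
      show (ρ : BoundedContinuousFunction (WeakDual.characterSpace ℂ A) ℂ) φ = _
      rw [h]; rfl
    · refine ⟨oneB, ?_⟩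
      show (oneB : BoundedContinuousFunction (WeakDual.characterSpace ℂ A) ℂ) φ ≠ 0
      rw [honecoe]
      simp
    · refine ⟨‖WeakDual.toStrongDual ((φ : WeakDual ℂ A))‖, fun σ => ?_⟩
      have h := isBSE_norm_bound σ.2 1 (fun _ => φ) (fun _ => 1)
      simp only [Fin.sum_univ_one, one_mul, one_smul] at h
      rw [mul_comm] at h
      exact h
  exact ⟨h1, hcomp, closure_minimal hrange hclosed⟩
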